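/- arXiv:1406.3679 — 4 statements merged into one kernel-verified Lean document; each statement's English description precedes it below -/
import Mathlib

section
/- For all integers n₁, n₂ ≥ 1, the second distance eigenvalue of the graph K₁∨(K_{n₁}∪K_{n₂}) lies in the open interval (−1, −0.5858). -/
/-- The distance matrix of a graph `G`, with real entries: the `(u,v)` entry is the
distance between `u` and `v` in `G`. -/
noncomputable def distMatrix {V : Type*} [Fintype V] (G : SimpleGraph V) : Matrix V V ℝ :=
  Matrix.of fun u v => (G.dist u v : ℝ)

/-- The distance matrix is real symmetric (Hermitian). -/
theorem distMatrix_isHermitian {V : Type*} [Fintype V] (G : SimpleGraph V) :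
    (distMatrix G).IsHermitian := by
  unfold Matrix.IsHermitian
  ext u v
  simp [distMatrix, Matrix.conjTranspose_apply, SimpleGraph.dist_comm]

/-- The multiset of eigenvalues of the distance matrix of `G` (with multiplicity). -/
noncomputable def distEigMultiset {V : Type*} [Fintype V] [DecidableEq V]
    (G : SimpleGraph V) : Multiset ℝ :=
  Finset.univ.val.map (distMatrix_isHermitian G).eigenvalues

/-- `distEig G k` is `λ_k(G)`, the `k`-th distance eigenvalue of `G` (1-indexed),
where the distance eigenvalues are arranged in non-increasing order. -/
noncomputable def distEig {V : Type*} [Fintype V] [DecidableEq V]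
    (G : SimpleGraph V) (k : ℕ) : ℝ :=
  (((distEigMultiset G).sort (· ≤ ·)).reverse).getD (k - 1) 0

/-- The disjoint union `G ∪ H` of two vertex-disjoint graphs. -/
def graphSum {α β : Type*} (G : SimpleGraph α) (H : SimpleGraph β) : SimpleGraph (α ⊕ β) where
  Adj x y :=
    match x, y with
    | Sum.inl a, Sum.inl b => G.Adj a b
    | Sum.inr a, Sum.inr b => H.Adj a b
    | _, _ => False
  symm := by
    constructor
    rintro (a | a) (b | b) h
    · exact G.adj_symm h
    · exact h
    · exact h
    · exact H.adj_symm h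
  loopless := by
    constructor
    rintro (a | a) h
    · exact G.irrefl h
    · exact H.irrefl h

/-- The join `G ∨ H` of two vertex-disjoint graphs: their disjoint union together with
all edges joining a vertex of `G` and a vertex of `H`. -/
def graphJoin {α β : Type*} (G : SimpleGraph α) (H : SimpleGraph β) : SimpleGraph (α ⊕ β) where
  Adj x y :=
    match x, y with
    | Sum.inl a, Sum.inl b => G.Adj a b
    | Sum.inr a, Sum.inr b => H.Adj a b
    | Sum.inl _, Sum.inr _ => True
    | Sum.inr _, Sum.inl _ => True
  symm := by
    constructor
    rintro (a | a) (b | b) h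
    · exact G.adj_symm h
    · trivial
    · trivial
    · exact H.adj_symm h
  loopless := by
    constructor
    rintro (a | a) h
    · exact G.irrefl h
    · exact H.irrefl h

/-- `K₁ ∨ (K_{n₁} ∪ K_{n₂})`. -/
def joinCliques2 (n₁ n₂ : ℕ) : SimpleGraph (Fin 1 ⊕ (Fin n₁ ⊕ Fin n₂)) :=
  graphJoin ⊤ (graphSum ⊤ ⊤)

/-- `K₁ ∨ (K_{n₁} ∪ K_{n₂} ∪ K_{n₃})`. -/
def joinCliques3 (n₁ n₂ n₃ : ℕ) : SimpleGraph (Fin 1 ⊕ (Fin n₁ ⊕ (Fin n₂ ⊕ Fin n₃))) :=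
  graphJoin ⊤ (graphSum ⊤ (graphSum ⊤ ⊤))

/-- `K₁ ∨ (K_{n₁} ∪ K_{n₂} ∪ K_{n₃} ∪ K_{n₄})`. -/
def joinCliques4 (n₁ n₂ n₃ n₄ : ℕ) :
    SimpleGraph (Fin 1 ⊕ (Fin n₁ ⊕ (Fin n₂ ⊕ (Fin n₃ ⊕ Fin n₄)))) :=
  graphJoin ⊤ (graphSum ⊤ (graphSum ⊤ (graphSum ⊤ ⊤)))


section AuxSpectral

open Matrix

variable {V' : Type*} [Fintype V'] [DecidableEq V']

lemma spectral_sub (A : Matrix V' V' ℝ) (hA : A.IsHermitian) (μ : ℝ) :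
    A - μ • 1 = (hA.eigenvectorUnitary : Matrix V' V' ℝ) * diagonal (fun i => hA.eigenvalues i - μ) *
      (star hA.eigenvectorUnitary : Matrix V' V' ℝ) := by
  have h1 : (hA.eigenvectorUnitary : Matrix V' V' ℝ) * (star hA.eigenvectorUnitary : Matrix V' V' ℝ) = 1 := by
    simpa using hA.eigenvectorUnitary.2.2
  have h2 : A = (hA.eigenvectorUnitary : Matrix V' V' ℝ) * diagonal (hA.eigenvalues) *
      (star hA.eigenvectorUnitary : Matrix V' V' ℝ) := by
    simpa using hA.spectral_theorem
  have hd : diagonal hA.eigenvalues - μ • (1 : Matrix V' V' ℝ)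
      = diagonal (fun i => hA.eigenvalues i - μ) := by
    ext i j
    by_cases h : i = j <;>
      simp [Matrix.diagonal_apply, Matrix.one_apply, Matrix.sub_apply, h]
  calc A - μ • 1
      = (hA.eigenvectorUnitary : Matrix V' V' ℝ) * (diagonal (hA.eigenvalues) - μ • 1) *
        (star hA.eigenvectorUnitary : Matrix V' V' ℝ) := by
        rw [Matrix.mul_sub, Matrix.sub_mul]
        rw [← h2]
        congr 1
        rw [Matrix.mul_smul, Matrix.mul_one, Matrix.smul_mul, h1]
    _ = _ := by rw [hd]

lemma rank_sub_eig (A : Matrix V' V' ℝ) (hA : A.IsHermitian) (μ : ℝ) :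
    (A - μ • 1).rank = Fintype.card {i // hA.eigenvalues i ≠ μ} := by
  have h1 : (hA.eigenvectorUnitary : Matrix V' V' ℝ) * (star hA.eigenvectorUnitary : Matrix V' V' ℝ) = 1 := by
    simpa using hA.eigenvectorUnitary.2.2
  have hdet : IsUnit (hA.eigenvectorUnitary : Matrix V' V' ℝ).det ∧
      IsUnit (star hA.eigenvectorUnitary : Matrix V' V' ℝ).det := by
    have := congrArg Matrix.det h1
    rw [Matrix.det_mul, Matrix.det_one] at this
    exact ⟨IsUnit.of_mul_eq_one _ this,
      IsUnit.of_mul_eq_one _ (by rw [mul_comm] at this; exact this)⟩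
  rw [spectral_sub A hA μ]
  rw [rank_mul_eq_left_of_isUnit_det _ _ hdet.2, rank_mul_eq_right_of_isUnit_det _ _ hdet.1,
    rank_diagonal]
  simp [sub_ne_zero]

lemma count_eig (A : Matrix V' V' ℝ) (hA : A.IsHermitian) (μ : ℝ) :
    Multiset.count μ (Finset.univ.val.map hA.eigenvalues) + (A - μ • 1).rank = Fintype.card V' := by
  rw [rank_sub_eig A hA μ]
  have hc : Multiset.count μ (Finset.univ.val.map hA.eigenvalues)
      = Fintype.card {i // hA.eigenvalues i = μ} := by
    rw [Multiset.count_map]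
    rw [Fintype.card_subtype]
    congr 1
    simp only [Finset.filter_val]
    congr 1
    ext i
    exact eq_comm
  rw [hc, Fintype.card_subtype, Fintype.card_subtype, ← Finset.card_union_of_disjoint]
  · congr 1
    rw [Finset.eq_univ_iff_forall]
    intro i
    simp [em']
    tauto
  · rw [Finset.disjoint_filter]
    tauto

lemma rank_le_of_ker (N : Matrix V' V' ℝ) (x : V' → ℝ) (hx : x ≠ 0) (h : N.mulVec x = 0) :
    N.rank + 1 ≤ Fintype.card V' := by
  have h1 := LinearMap.finrank_range_add_finrank_ker N.mulVecLin
  have h2 : Module.finrank ℝ (V' → ℝ) = Fintype.card V' := by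
    simp [Module.finrank_pi]
  have h3 : 0 < Module.finrank ℝ (LinearMap.ker N.mulVecLin) := by
    rw [Module.finrank_pos_iff]
    refine ⟨⟨x, by rw [LinearMap.mem_ker, Matrix.mulVecLin_apply]; exact h⟩, 0, ?_⟩
    simp only [ne_eq, Submodule.mk_eq_zero]
    exact hx
  have h4 : N.rank = Module.finrank ℝ (LinearMap.range N.mulVecLin) := rfl
  omega

end AuxSpectral

section JC2

open Matrix

/-- Vertex type of `joinCliques2`. -/
abbrev VT (a b : ℕ) := Fin 1 ⊕ (Fin a ⊕ Fin b)

/-- Explicit distance function for `joinCliques2`. -/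
def dfun {a b : ℕ} : VT a b → VT a b → ℝ
  | Sum.inl _, Sum.inl _ => 0
  | Sum.inl _, Sum.inr _ => 1
  | Sum.inr _, Sum.inl _ => 1
  | Sum.inr (Sum.inl i), Sum.inr (Sum.inl j) => if i = j then 0 else 1
  | Sum.inr (Sum.inr i), Sum.inr (Sum.inr j) => if i = j then 0 else 1
  | _, _ => 2

lemma adj_center_l {a b : ℕ} (x : Fin 1) (y : Fin a ⊕ Fin b) :
    (joinCliques2 a b).Adj (Sum.inl x) (Sum.inr y) := by
  show True
  trivial

lemma dist_cross {a b : ℕ} (u v : VT a b) (hne : u ≠ v)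
    (hnadj : ¬ (joinCliques2 a b).Adj u v)
    (hu : (joinCliques2 a b).Adj u (Sum.inl 0)) (hv : (joinCliques2 a b).Adj (Sum.inl 0) v) :
    (joinCliques2 a b).dist u v = 2 := by
  let w : (joinCliques2 a b).Walk u v := .cons hu (.cons hv .nil)
  have h2 : (joinCliques2 a b).dist u v ≤ 2 := by
    have := SimpleGraph.dist_le w
    simpa [w] using this
  have h0 : (joinCliques2 a b).dist u v ≠ 0 := by
    rw [SimpleGraph.dist_ne_zero_iff_ne_and_reachable]
    exact ⟨hne, ⟨w⟩⟩
  have h1 : (joinCliques2 a b).dist u v ≠ 1 := by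
    rw [Ne, SimpleGraph.dist_eq_one_iff_adj]
    exact hnadj
  omega

lemma distMatrix_joinCliques2 (a b : ℕ) :
    distMatrix (joinCliques2 a b) = Matrix.of (dfun (a := a) (b := b)) := by
  ext u v
  show ((joinCliques2 a b).dist u v : ℝ) = dfun u v
  rcases u with x | (i | i) <;> rcases v with y | (j | j)
  · have : x = y := Subsingleton.elim x y
    subst this
    simp [SimpleGraph.dist_self, dfun]
  · rw [SimpleGraph.dist_eq_one_iff_adj.mpr (adj_center_l x _)]; simp [dfun]
  · rw [SimpleGraph.dist_eq_one_iff_adj.mpr (adj_center_l x _)]; simp [dfun]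
  · rw [SimpleGraph.dist_comm, SimpleGraph.dist_eq_one_iff_adj.mpr (adj_center_l y _)]
    simp [dfun]
  · by_cases h : i = j
    · subst h; simp [SimpleGraph.dist_self, dfun]
    · have hadj : (joinCliques2 a b).Adj (Sum.inr (Sum.inl i)) (Sum.inr (Sum.inl j)) := by
        show (⊤ : SimpleGraph (Fin a)).Adj i j
        simpa using h
      rw [SimpleGraph.dist_eq_one_iff_adj.mpr hadj]
      simp [dfun, h]
  · rw [dist_cross _ _ (by simp) (by rintro ⟨⟩) (by show True; trivial) (adj_center_l 0 _)]
    simp [dfun]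
  · rw [SimpleGraph.dist_comm, SimpleGraph.dist_eq_one_iff_adj.mpr (adj_center_l y _)]
    simp [dfun]
  · rw [dist_cross _ _ (by simp) (by rintro ⟨⟩) (by show True; trivial) (adj_center_l 0 _)]
    simp [dfun]
  · by_cases h : i = j
    · subst h; simp [SimpleGraph.dist_self, dfun]
    · have hadj : (joinCliques2 a b).Adj (Sum.inr (Sum.inr i)) (Sum.inr (Sum.inr j)) := by
        show (⊤ : SimpleGraph (Fin b)).Adj i j
        simpa using h
      rw [SimpleGraph.dist_eq_one_iff_adj.mpr hadj]
      simp [dfun, h]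

/-- block index -/
def bidx {a b : ℕ} : VT a b → Fin 3
  | Sum.inl _ => 0
  | Sum.inr (Sum.inl _) => 1
  | Sum.inr (Sum.inr _) => 2

/-- The quotient (equitable partition) matrix of the distance matrix. -/
noncomputable def Qmat (a b : ℕ) : Matrix (Fin 3) (Fin 3) ℝ :=
  !![0, a, b; 1, (a:ℝ) - 1, 2*b; 1, 2*a, (b:ℝ) - 1]

/-- lift of a `Fin 3` vector to a vector constant on blocks -/
def vlift {a b : ℕ} (w : Fin 3 → ℝ) : VT a b → ℝ := fun u => w (bidx u)

lemma sum_ite_ne {n : ℕ} (i : Fin n) (c : ℝ) :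
    ∑ x : Fin n, (if i = x then 0 else c) = n * c - c := by
  have h : ∀ x, (if i = x then (0:ℝ) else c) = c - (if i = x then c else 0) := by
    intro x; split <;> ring
  simp [h, Finset.sum_sub_distrib, Finset.sum_ite_eq, mul_comm]

lemma mulVec_vlift {a b : ℕ} (w : Fin 3 → ℝ) (r : ℝ) (hw : (Qmat a b).mulVec w = r • w) :
    (Matrix.of (dfun (a := a) (b := b))).mulVec (vlift w) = r • (vlift w) := by
  have h0 := congrFun hw 0
  have h1 := congrFun hw 1
  have h2 := congrFun hw 2
  simp [Qmat, Matrix.mulVec, dotProduct, Fin.sum_univ_three,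
    Matrix.cons_val_zero, Matrix.cons_val_one] at h0 h1 h2
  funext u
  rcases u with x | (i | i) <;>
    simp [Matrix.mulVec, dotProduct, Fintype.sum_sum_type, dfun, vlift, bidx,
      Finset.sum_ite_eq, Finset.mul_sum, Finset.sum_sub_distrib, apply_ite]
  · linarith [h0]
  · rw [sum_ite_ne]; linarith [h1]
  · rw [sum_ite_ne]; linarith [h2]

def cpat : Matrix (Fin 3) (Fin 3) ℝ := !![1,1,1;1,1,2;1,2,1]

def chi {a b : ℕ} (k : Fin 3) : VT a b → ℝ := fun u => if bidx u = k then 1 else 0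

lemma entry_pattern {a b : ℕ} (u v : VT a b) :
    (Matrix.of (dfun (a := a) (b := b)) - (-1 : ℝ) • 1) u v = cpat (bidx u) (bidx v) := by
  have hsub : ∀ u v : VT a b, (Matrix.of (dfun (a := a) (b := b)) - (-1 : ℝ) • 1) u v
      = dfun u v + (if u = v then 1 else 0) := by
    intro u v
    by_cases h : u = v <;> simp [Matrix.sub_apply, Matrix.one_apply, h]
  rw [hsub]
  rcases u with x | (i | i) <;> rcases v with y | (j | j)
  · simp [dfun, bidx, cpat, Matrix.vecHead, Matrix.vecTail, Subsingleton.elim x y]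
  · simp [dfun, bidx, cpat, Matrix.vecHead, Matrix.vecTail]
  · simp [dfun, bidx, cpat, Matrix.vecHead, Matrix.vecTail]
  · simp [dfun, bidx, cpat, Matrix.vecHead, Matrix.vecTail]
  · rcases eq_or_ne i j with h | h <;> simp [dfun, bidx, cpat, Matrix.vecHead, Matrix.vecTail, h]
  · simp [dfun, bidx, cpat, Matrix.vecHead, Matrix.vecTail]
  · simp [dfun, bidx, cpat, Matrix.vecHead, Matrix.vecTail]
  · simp [dfun, bidx, cpat, Matrix.vecHead, Matrix.vecTail]
  · rcases eq_or_ne i j with h | h <;> simp [dfun, bidx, cpat, Matrix.vecHead, Matrix.vecTail, h]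

lemma rank_le_three {a b : ℕ} :
    (Matrix.of (dfun (a := a) (b := b)) - (-1 : ℝ) • 1).rank ≤ 3 := by
  set N := Matrix.of (dfun (a := a) (b := b)) - (-1 : ℝ) • 1 with hNdef
  have key : ∀ x : VT a b → ℝ, N.mulVec x
      = ∑ k : Fin 3, (∑ v, cpat k (bidx v) * x v) • chi (a := a) (b := b) k := by
    intro x
    funext u
    rw [Finset.sum_apply]
    have hite : ∀ k, ((∑ v, cpat k (bidx v) * x v) • chi (a := a) (b := b) k) u
        = if bidx u = k then (∑ v, cpat k (bidx v) * x v) else 0 := by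
      intro k
      by_cases h : bidx u = k <;> simp [chi, h]
    simp only [hite, Finset.sum_ite_eq, Finset.mem_univ, if_true]
    simp only [Matrix.mulVec, dotProduct]
    congr 1
    funext v
    rw [hNdef, entry_pattern]
  have hrange : LinearMap.range N.mulVecLin
      ≤ Submodule.span ℝ (Set.range (chi (a := a) (b := b))) := by
    rintro _ ⟨x, rfl⟩
    rw [Matrix.mulVecLin_apply, key x]
    exact Submodule.sum_mem _ fun k _ =>
      Submodule.smul_mem _ _ (Submodule.subset_span ⟨k, rfl⟩)
  calc N.rank = Module.finrank ℝ (LinearMap.range N.mulVecLin) := rfl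
    _ ≤ Module.finrank ℝ (Submodule.span ℝ (Set.range (chi (a := a) (b := b)))) :=
        Submodule.finrank_mono hrange
    _ ≤ _ := by
        classical
        refine le_trans (finrank_span_le_card _) ?_
        rw [Set.toFinset_range]
        exact le_trans (Finset.card_image_le) (by simp)

/-- The key cubic polynomial (characteristic polynomial of the quotient matrix, up to sign). -/
noncomputable def gcub (a b : ℕ) (t : ℝ) : ℝ :=
  (t - a - b) * (t + 1)^2 - a * b * (3*t + 2)

lemma det_Qmat (a b : ℕ) (t : ℝ) :
    (Qmat a b - t • 1).det = -(gcub a b t) := by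
  simp [Qmat, gcub, Matrix.det_fin_three, Matrix.sub_apply, Matrix.smul_apply,
    Matrix.one_apply, Matrix.vecHead, Matrix.vecTail]
  ring

lemma exists_eigvec (a b : ℕ) (t : ℝ) (h : gcub a b t = 0) :
    ∃ w : Fin 3 → ℝ, w ≠ 0 ∧ (Qmat a b).mulVec w = t • w := by
  have hdet : (Qmat a b - t • 1).det = 0 := by rw [det_Qmat, h, neg_zero]
  obtain ⟨w, hw0, hw⟩ := (Matrix.exists_mulVec_eq_zero_iff).mpr hdet
  refine ⟨w, hw0, ?_⟩
  rw [Matrix.sub_mulVec, Matrix.smul_mulVec, Matrix.one_mulVec, sub_eq_zero] at hw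
  exact hw

lemma gcont (a b : ℕ) : Continuous (gcub a b) := by
  unfold gcub; fun_prop

lemma exists_roots (a b : ℕ) (ha : 1 ≤ a) (hb : 1 ≤ b) :
    ∃ r₁ r₂ r₃ : ℝ,
      gcub a b r₁ = 0 ∧ gcub a b r₂ = 0 ∧ gcub a b r₃ = 0 ∧
      r₁ < -1 ∧ r₂ ∈ Set.Ioo (-1 : ℝ) (-2/3) ∧ 0 < r₃ := by
  have hA : (1:ℝ) ≤ a := by exact_mod_cast ha
  have hB : (1:ℝ) ≤ b := by exact_mod_cast hb
  have hg1 : gcub a b (-1) = a * b := by unfold gcub; ring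
  have hg1pos : 0 < gcub a b (-1) := by rw [hg1]; positivity
  have hL : gcub a b (-(a + b + 2)) < 0 := by
    unfold gcub
    nlinarith [sq_nonneg ((a:ℝ) - b), sq_nonneg ((a:ℝ) + b),
      mul_pos (lt_of_lt_of_le one_pos hA) (lt_of_lt_of_le one_pos hB)]
  have h1 : (0:ℝ) ∈ Set.Ioo (gcub a b (-(a + b + 2))) (gcub a b (-1)) := ⟨hL, hg1pos⟩
  have hsub1 := intermediate_value_Ioo (by nlinarith : -((a:ℝ) + b + 2) ≤ -1)
    (gcont a b).continuousOn
  obtain ⟨r₁, hr₁mem, hr₁⟩ := hsub1 h1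
  have hg2 : gcub a b (-2/3) < 0 := by
    unfold gcub; nlinarith
  have h2 : (0:ℝ) ∈ Set.Ioo (gcub a b (-2/3)) (gcub a b (-1)) := ⟨hg2, hg1pos⟩
  have hsub2 := intermediate_value_Ioo' (by norm_num : (-1:ℝ) ≤ -2/3) (gcont a b).continuousOn
  obtain ⟨r₂, hr₂mem, hr₂⟩ := hsub2 h2
  have hg0 : gcub a b 0 < 0 := by unfold gcub; nlinarith
  have hgK : 0 < gcub a b (a + b + 3*a*b) := by
    have hAB : (0:ℝ) < a * b := by nlinarith
    have heq : gcub a b ((a:ℝ) + b + 3*a*b)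
        = (a*b) * (3*((a:ℝ)+b+3*a*b)^2 + 3*((a:ℝ)+b+3*a*b) + 1) := by unfold gcub; ring
    rw [heq]
    have hh2 : (0:ℝ) < 3*((a:ℝ)+b+3*a*b)^2 + 3*((a:ℝ)+b+3*a*b) + 1 := by nlinarith
    exact mul_pos hAB hh2
  have h3 : (0:ℝ) ∈ Set.Ioo (gcub a b 0) (gcub a b (a + b + 3*a*b)) := ⟨hg0, hgK⟩
  have hsub3 := intermediate_value_Ioo (by nlinarith : (0:ℝ) ≤ a + b + 3*a*b)
    (gcont a b).continuousOn
  obtain ⟨r₃, hr₃mem, hr₃⟩ := hsub3 h3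
  exact ⟨r₁, r₂, r₃, hr₁, hr₂, hr₃, hr₁mem.2, hr₂mem, hr₃mem.1⟩

end JC2

theorem secondDistEig_joinCliques2 (n₁ n₂ : ℕ) (h₁ : 1 ≤ n₁) (h₂ : 1 ≤ n₂) :
    distEig (joinCliques2 n₁ n₂) 2 ∈ Set.Ioo (-1 : ℝ) (-0.5858) := by
  classical
  obtain ⟨r₁, r₂, r₃, hg₁, hg₂, hg₃, hr₁, hr₂, hr₃⟩ := exists_roots n₁ n₂ h₁ h₂
  have hr₂' : r₂ < -2/3 := hr₂.2
  have hr₂0 : -1 < r₂ := hr₂.1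
  set G := joinCliques2 n₁ n₂ with hG
  have hDmat : distMatrix G = Matrix.of (dfun (a := n₁) (b := n₂)) :=
    distMatrix_joinCliques2 n₁ n₂
  set M : Multiset ℝ := distEigMultiset G with hMdef
  have hcardV : Fintype.card (VT n₁ n₂) = n₁ + n₂ + 1 := by
    simp [Fintype.card_sum]; omega
  have hcardM : Multiset.card M = n₁ + n₂ + 1 := by
    rw [hMdef]
    unfold distEigMultiset
    rw [Multiset.card_map]
    simpa using hcardV
  have hroot : ∀ r : ℝ, gcub n₁ n₂ r = 0 → 1 ≤ Multiset.count r M := by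
    intro r hr
    obtain ⟨w, hw0, hw⟩ := exists_eigvec n₁ n₂ r hr
    have hvlift : (distMatrix G).mulVec (vlift w) = r • vlift w := by
      rw [hDmat]; exact mulVec_vlift w r hw
    have hv0 : vlift (a := n₁) (b := n₂) w ≠ 0 := by
      intro hz
      apply hw0
      funext k
      have ha0 := congrFun hz (Sum.inl 0)
      have ha1 := congrFun hz (Sum.inr (Sum.inl ⟨0, h₁⟩))
      have ha2 := congrFun hz (Sum.inr (Sum.inr ⟨0, h₂⟩))
      fin_cases k
      · exact ha0
      · exact ha1
      · exact ha2
    have hker : (distMatrix G - r • 1).mulVec (vlift w) = 0 := by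
      rw [Matrix.sub_mulVec, Matrix.smul_mulVec, Matrix.one_mulVec, hvlift, sub_self]
    have hrank := rank_le_of_ker (distMatrix G - r • 1) (vlift w) hv0 hker
    have hcnt := count_eig (distMatrix G) (distMatrix_isHermitian G) r
    rw [hcardV] at hrank hcnt
    have hconv : Multiset.count r M
        = Multiset.count r (Finset.univ.val.map (distMatrix_isHermitian G).eigenvalues) := rfl
    omega
  have hminus : n₁ + n₂ - 2 ≤ Multiset.count (-1 : ℝ) M := by
    have hcnt := count_eig (distMatrix G) (distMatrix_isHermitian G) (-1)
    have hrank : (distMatrix G - (-1 : ℝ) • 1).rank ≤ 3 := by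
      rw [hDmat]; exact rank_le_three
    rw [hcardV] at hcnt
    have hconv : Multiset.count (-1 : ℝ) M
        = Multiset.count (-1 : ℝ) (Finset.univ.val.map (distMatrix_isHermitian G).eigenvalues) :=
      rfl
    omega
  have hne12 : r₁ ≠ r₂ := by linarith
  have hne13 : r₁ ≠ r₃ := by linarith
  have hne23 : r₂ ≠ r₃ := by linarith
  have hne1m : r₁ ≠ -1 := by linarith
  have hne2m : r₂ ≠ -1 := by linarith
  have hne3m : r₃ ≠ -1 := by linarith
  set m := n₁ + n₂ - 2 with hm
  set S : Multiset ℝ := r₁ ::ₘ (Multiset.replicate m (-1 : ℝ) + (r₂ ::ₘ {r₃})) with hS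
  have hScount : ∀ x : ℝ, Multiset.count x S ≤ Multiset.count x M := by
    intro x
    rw [hS]
    rcases eq_or_ne x r₁ with rfl | e1
    · simpa [Multiset.count_cons, Multiset.count_replicate, Multiset.count_singleton,
        hne1m, hne12, hne13, Ne.symm hne1m, Ne.symm hne12, Ne.symm hne13] using hroot _ hg₁
    rcases eq_or_ne x r₂ with rfl | e2
    · simpa [Multiset.count_cons, Multiset.count_replicate, Multiset.count_singleton,
        hne2m, hne23, Ne.symm hne2m, Ne.symm hne23, hne12, Ne.symm hne12] using hroot _ hg₂
    rcases eq_or_ne x r₃ with rfl | e3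
    · simpa [Multiset.count_cons, Multiset.count_replicate, Multiset.count_singleton,
        hne3m, Ne.symm hne3m, hne13, Ne.symm hne13, hne23, Ne.symm hne23] using hroot _ hg₃
    rcases eq_or_ne x (-1) with rfl | e4
    · simpa [Multiset.count_cons, Multiset.count_replicate, Multiset.count_singleton,
        Ne.symm hne1m, Ne.symm hne2m, Ne.symm hne3m, hne1m, hne2m, hne3m] using hminus
    · simp [Multiset.count_cons, Multiset.count_replicate, Multiset.count_singleton,
        e1, e2, e3, e4, Ne.symm e1, Ne.symm e2, Ne.symm e3, Ne.symm e4]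
  have hle : S ≤ M := Multiset.le_iff_count.mpr hScount
  have hcardS : Multiset.card S = n₁ + n₂ + 1 := by
    rw [hS]
    simp [Multiset.card_replicate]
    omega
  have hSM : M = S := (Multiset.eq_of_le_of_card_le hle (by omega)).symm
  set L : List ℝ := r₁ :: (List.replicate m (-1 : ℝ) ++ [r₂, r₃]) with hL
  have hLS : (L : Multiset ℝ) = S := by
    rw [hL, hS]
    rfl
  have hsorted : L.Pairwise (· ≤ ·) := by
    have h23 : r₂ ≤ r₃ := by linarith
    rw [hL, List.pairwise_cons]
    constructor
    · intro y hy
      simp only [List.mem_append, List.mem_replicate, List.mem_cons, List.mem_singleton,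
        List.not_mem_nil, or_false] at hy
      rcases hy with ⟨-, rfl⟩ | rfl | rfl
      · linarith
      · linarith
      · linarith
    · rw [List.pairwise_append]
      refine ⟨List.pairwise_replicate.mpr (Or.inr le_rfl), ?_, ?_⟩
      · simp [List.pairwise_cons, h23]
      · intro x hx y hy
        have hx1 : x = -1 := List.eq_of_mem_replicate hx
        subst hx1
        simp only [List.mem_cons, List.mem_singleton, List.not_mem_nil, or_false] at hy
        rcases hy with rfl | rfl
        · linarith
        · linarith
  have hsortEq : M.sort (· ≤ ·) = L := by
    refine List.Perm.eq_of_pairwise' (Multiset.pairwise_sort _ _) hsorted ?_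
    rw [← Multiset.coe_eq_coe, Multiset.sort_eq, hLS, hSM]
  have heig : distEig G 2 = r₂ := by
    unfold distEig
    rw [show distEigMultiset G = M from rfl, hsortEq, hL]
    simp [List.reverse_append]
  rw [heig]
  constructor
  · exact hr₂0
  · have hnum : (-2/3 : ℝ) < -0.5858 := by norm_num
    linarith
end

section
/- For all integers n₁, n₂, n₃ ≥ 1, the second distance eigenvalue of the graph K₁∨(K_{n₁}∪K_{n₂}∪K_{n₃}) lies in the open interval (−1, −0.5858). -/
/-! ### Auxiliary lemmas -/

section SpectralAux

open Matrix Finset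

variable {ι : Type*} [Fintype ι] [DecidableEq ι] {M : Matrix ι ι ℝ}

lemma aux_dotProduct_sum (v : ι → ℝ) (f : ι → ι → ℝ) :
    v ⬝ᵥ (∑ i, f i) = ∑ i, v ⬝ᵥ f i := by
  simp only [dotProduct, Finset.sum_apply, Finset.mul_sum]
  exact Finset.sum_comm

lemma aux_mulVec_sum (f : ι → ι → ℝ) : M *ᵥ (∑ i, f i) = ∑ i, M *ᵥ f i := by
  simpa only [Matrix.mulVecLin_apply] using map_sum (Matrix.mulVecLin M) f Finset.univ

omit [DecidableEq ι] in
lemma aux_inner_eq_dot (a b : EuclideanSpace ℝ ι) :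
    (inner ℝ a b : ℝ) = (a : ι → ℝ) ⬝ᵥ (b : ι → ℝ) := by
  simp [PiLp.inner_apply, RCLike.inner_apply, dotProduct, mul_comm]

omit [DecidableEq ι] in
lemma aux_dot_self_pos {x : ι → ℝ} (hx : x ≠ 0) : 0 < x ⬝ᵥ x := by
  obtain ⟨u, hu⟩ := Function.ne_iff.mp hx
  refine Finset.sum_pos' (fun v _ => mul_self_nonneg _) ⟨u, Finset.mem_univ u, ?_⟩
  exact mul_self_pos.mpr hu

lemma aux_dot_expand (hM : M.IsHermitian) (z : ι → ℝ) :
    z ⬝ᵥ (M *ᵥ z) = ∑ i, hM.eigenvalues i * ((hM.eigenvectorBasis i : ι → ℝ) ⬝ᵥ z)^2 ∧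
    z ⬝ᵥ z = ∑ i, ((hM.eigenvectorBasis i : ι → ℝ) ⬝ᵥ z)^2 := by
  set B := hM.eigenvectorBasis with hB
  set c : ι → ℝ := fun i => (B i : ι → ℝ) ⬝ᵥ z with hc
  have hdotc : ∀ i, z ⬝ᵥ (B i : ι → ℝ) = c i := by
    intro i; rw [hc]; exact dotProduct_comm _ _
  have hMu : ∀ i, M *ᵥ (B i : ι → ℝ) = hM.eigenvalues i • (B i : ι → ℝ) :=
    fun i => hM.mulVec_eigenvectorBasis i
  have hz : z = ∑ i, c i • (B i : ι → ℝ) := by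
    have := B.sum_repr' (WithLp.toLp 2 z)
    have h2 : ∀ i, (inner ℝ (B i) (WithLp.toLp 2 z) : ℝ) = c i :=
      fun i => aux_inner_eq_dot _ _
    calc z = ∑ i, (inner ℝ (B i) (WithLp.toLp 2 z) : ℝ) • (B i : ι → ℝ) := by
              have h3 := congrArg WithLp.ofLp this
              simp only [WithLp.ofLp_sum, WithLp.ofLp_smul] at h3
              exact h3.symm
      _ = ∑ i, c i • (B i : ι → ℝ) := by simp_rw [h2]
  constructor
  · calc z ⬝ᵥ (M *ᵥ z) = z ⬝ᵥ (M *ᵥ ∑ i, c i • (B i : ι → ℝ)) := by rw [← hz]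
      _ = z ⬝ᵥ ∑ i, c i • (M *ᵥ (B i : ι → ℝ)) := by
            rw [aux_mulVec_sum]; congr 1
            exact Finset.sum_congr rfl fun i _ => mulVec_smul M (c i) _
      _ = ∑ i, c i * (z ⬝ᵥ (M *ᵥ (B i : ι → ℝ))) := by
            rw [aux_dotProduct_sum]
            exact Finset.sum_congr rfl fun i _ => dotProduct_smul (c i) z _
      _ = ∑ i, hM.eigenvalues i * (c i)^2 := by
            congr 1; ext i
            rw [hMu i, dotProduct_smul, smul_eq_mul, hdotc]
            ring
      _ = _ := rfl
  · calc z ⬝ᵥ z = z ⬝ᵥ ∑ i, c i • (B i : ι → ℝ) := by rw [← hz]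
      _ = ∑ i, c i * (z ⬝ᵥ (B i : ι → ℝ)) := by
            rw [aux_dotProduct_sum]
            exact Finset.sum_congr rfl fun i _ => dotProduct_smul (c i) z _
      _ = ∑ i, (c i)^2 := by congr 1; ext i; rw [hdotc]; ring

lemma aux_eigen_dot (hM : M.IsHermitian) (i j : ι) :
    (hM.eigenvectorBasis i : ι → ℝ) ⬝ᵥ (hM.eigenvectorBasis j : ι → ℝ)
      = if i = j then 1 else 0 := by
  rw [← aux_inner_eq_dot]
  exact orthonormal_iff_ite.mp hM.eigenvectorBasis.orthonormal i j

lemma aux_key1 (hM : M.IsHermitian) (w : ι → ℝ) (c : ℝ)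
    (h : ∀ x : ι → ℝ, x ≠ 0 → w ⬝ᵥ x = 0 → x ⬝ᵥ (M *ᵥ x) < c * (x ⬝ᵥ x)) :
    ∀ i j, i ≠ j → ¬(c ≤ hM.eigenvalues i ∧ c ≤ hM.eigenvalues j) := by
  intro i j hij ⟨hi, hj⟩
  set B := hM.eigenvectorBasis with hB
  set u : ι → ℝ := (B i : ι → ℝ)
  set v : ι → ℝ := (B j : ι → ℝ)
  have hMu : M *ᵥ u = hM.eigenvalues i • u := hM.mulVec_eigenvectorBasis i
  have hMv : M *ᵥ v = hM.eigenvalues j • v := hM.mulVec_eigenvectorBasis j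
  have huu : u ⬝ᵥ u = 1 := by simpa using aux_eigen_dot hM i i
  have hvv : v ⬝ᵥ v = 1 := by simpa using aux_eigen_dot hM j j
  have huv : u ⬝ᵥ v = 0 := by simpa [hij] using aux_eigen_dot hM i j
  have hvu : v ⬝ᵥ u = 0 := by simpa [hij.symm] using aux_eigen_dot hM j i
  obtain ⟨a, b, hab, hwx⟩ : ∃ a b : ℝ, ¬(a = 0 ∧ b = 0) ∧ a * (w ⬝ᵥ u) + b * (w ⬝ᵥ v) = 0 := by
    by_cases h0 : w ⬝ᵥ u = 0 ∧ w ⬝ᵥ v = 0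
    · exact ⟨1, 0, by simp, by simp [h0.1, h0.2]⟩
    · refine ⟨w ⬝ᵥ v, -(w ⬝ᵥ u), ?_, by ring⟩
      rintro ⟨h1, h2⟩
      exact h0 ⟨neg_eq_zero.mp h2, h1⟩
  set x : ι → ℝ := a • u + b • v with hx
  have hwx0 : w ⬝ᵥ x = 0 := by
    rw [hx, dotProduct_add, dotProduct_smul, dotProduct_smul, smul_eq_mul, smul_eq_mul, hwx]
  have hux : u ⬝ᵥ x = a := by
    rw [hx, dotProduct_add, dotProduct_smul, dotProduct_smul, smul_eq_mul, smul_eq_mul,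
      huu, huv]; ring
  have hvx : v ⬝ᵥ x = b := by
    rw [hx, dotProduct_add, dotProduct_smul, dotProduct_smul, smul_eq_mul, smul_eq_mul,
      hvv, hvu]; ring
  have hxne : x ≠ 0 := by
    intro h0
    apply hab
    constructor
    · rw [← hux, h0, dotProduct_zero]
    · rw [← hvx, h0, dotProduct_zero]
  have hform : x ⬝ᵥ (M *ᵥ x) = a^2 * hM.eigenvalues i + b^2 * hM.eigenvalues j := by
    rw [hx, mulVec_add, mulVec_smul, mulVec_smul, hMu, hMv]
    simp only [add_dotProduct, dotProduct_add, smul_dotProduct, dotProduct_smul,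
      smul_eq_mul, huu, hvv, huv, hvu]
    ring
  have hnorm : x ⬝ᵥ x = a^2 + b^2 := by
    rw [hx]
    simp only [add_dotProduct, dotProduct_add, smul_dotProduct, dotProduct_smul,
      smul_eq_mul, huu, hvv, huv, hvu]
    ring
  have := h x hxne hwx0
  rw [hform, hnorm] at this
  have ha2 : a^2 + b^2 > 0 := by
    rcases not_and_or.mp hab with ha | hb
    · positivity
    · positivity
  nlinarith [sq_nonneg a, sq_nonneg b]

lemma aux_key2 (hM : M.IsHermitian) (x y : ι → ℝ) (c : ℝ) (hx : x ≠ 0)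
    (h : ∀ a b : ℝ, ¬(a = 0 ∧ b = 0) →
      c * ((a • x + b • y) ⬝ᵥ (a • x + b • y)) < (a • x + b • y) ⬝ᵥ (M *ᵥ (a • x + b • y))) :
    ∃ i j, i ≠ j ∧ c < hM.eigenvalues i ∧ c < hM.eigenvalues j := by
  by_contra hcon
  push_neg at hcon
  have hne : Nonempty ι := by
    by_contra hempty
    exact hx (funext fun i => absurd (Nonempty.intro i) hempty)
  obtain ⟨i₀, hi₀⟩ : ∃ i₀, ∀ i ≠ i₀, hM.eigenvalues i ≤ c := by
    by_cases hall : ∀ i, hM.eigenvalues i ≤ c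
    · exact ⟨Classical.arbitrary ι, fun i _ => hall i⟩
    · push_neg at hall
      obtain ⟨i₀, hi₀⟩ := hall
      exact ⟨i₀, fun i hi => hcon i₀ i hi.symm hi₀⟩
  set B := hM.eigenvectorBasis with hB
  set u : ι → ℝ := (B i₀ : ι → ℝ) with hu
  obtain ⟨a, b, hab, huz⟩ : ∃ a b : ℝ, ¬(a = 0 ∧ b = 0) ∧ a * (u ⬝ᵥ x) + b * (u ⬝ᵥ y) = 0 := by
    by_cases h0 : u ⬝ᵥ x = 0 ∧ u ⬝ᵥ y = 0
    · exact ⟨1, 0, by simp, by simp [h0.1, h0.2]⟩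
    · refine ⟨u ⬝ᵥ y, -(u ⬝ᵥ x), ?_, by ring⟩
      rintro ⟨h1, h2⟩
      exact h0 ⟨neg_eq_zero.mp h2, h1⟩
  set z : ι → ℝ := a • x + b • y with hz
  have huz0 : u ⬝ᵥ z = 0 := by
    rw [hz, dotProduct_add, dotProduct_smul, dotProduct_smul, smul_eq_mul, smul_eq_mul, huz]
  have hlt := h a b hab
  obtain ⟨he1, he2⟩ := aux_dot_expand hM z
  have hle : z ⬝ᵥ (M *ᵥ z) ≤ c * (z ⬝ᵥ z) := by
    rw [he1, he2, Finset.mul_sum]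
    apply Finset.sum_le_sum
    intro i _
    by_cases hii : i = i₀
    · subst hii
      rw [← hu, huz0]
      simp
    · exact mul_le_mul_of_nonneg_right (hi₀ i hii) (sq_nonneg _)
  rw [← hz] at hlt
  linarith

end SpectralAux

section MultisetAux

lemma aux_G0 {m : Multiset ℝ} (hcard : 2 ≤ Multiset.card m) :
    ∃ (a b : ℝ) (t : List ℝ), ((m.sort (· ≤ ·)).reverse) = a :: b :: t ∧ b ≤ a ∧
      m = a ::ₘ b ::ₘ (↑t : Multiset ℝ) ∧ (∀ x ∈ (↑t : Multiset ℝ), x ≤ b) := by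
  set l := m.sort (· ≤ ·) with hl
  have hsort : l.Pairwise (· ≤ ·) := m.pairwise_sort _
  have hrev : l.reverse.Pairwise (fun a b => b ≤ a) := List.pairwise_reverse.mpr hsort
  have hlen : l.reverse.length = Multiset.card m := by
    rw [List.length_reverse, Multiset.length_sort]
  rcases hr : l.reverse with _ | ⟨a, _ | ⟨b, t⟩⟩
  · rw [hr] at hlen; simp at hlen; omega
  · rw [hr] at hlen; simp at hlen; omega
  · rw [hr] at hrev
    refine ⟨a, b, t, rfl, List.rel_of_pairwise_cons hrev (show b ∈ b :: t by simp), ?_, ?_⟩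
    · have hcoe : (↑(a :: b :: t) : Multiset ℝ) = m := by
        rw [← hr, Multiset.coe_reverse, hl, Multiset.sort_eq]
      rw [← hcoe]; rfl
    · intro x hx
      have := (List.pairwise_cons.mp hrev).2
      exact List.rel_of_pairwise_cons this (show x ∈ t by simpa using hx)

lemma aux_G1 {m : Multiset ℝ} {c : ℝ} (hcard : 2 ≤ Multiset.card m)
    (h : Multiset.card (m.filter (fun x => c ≤ x)) ≤ 1) :
    ((m.sort (· ≤ ·)).reverse).getD 1 0 < c := by
  obtain ⟨a, b, t, hr, hab, hm, _⟩ := aux_G0 hcard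
  rw [hr]
  by_contra hc
  push_neg at hc
  have hb : c ≤ b := by simpa using hc
  rw [hm, Multiset.filter_cons_of_pos _ (le_trans hb hab),
    Multiset.filter_cons_of_pos _ hb] at h
  simp at h

lemma aux_G2 {m : Multiset ℝ} {c : ℝ}
    (h : 2 ≤ Multiset.card (m.filter (fun x => c < x))) :
    c < ((m.sort (· ≤ ·)).reverse).getD 1 0 := by
  have hcard : 2 ≤ Multiset.card m :=
    le_trans h (Multiset.card_le_card (Multiset.filter_le _ _))
  obtain ⟨a, b, t, hr, hab, hm, ht⟩ := aux_G0 hcard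
  rw [hr]
  by_contra hc
  push_neg at hc
  have hb : b ≤ c := by simpa using hc
  rw [hm, Multiset.filter_cons] at h
  have hzero : Multiset.filter (fun x => c < x) (b ::ₘ (↑t : Multiset ℝ)) = 0 := by
    refine Multiset.filter_eq_nil.mpr ?_
    intro x hx
    simp only [Multiset.mem_cons] at hx
    rcases hx with rfl | hx
    · exact not_lt.mpr hb
    · exact not_lt.mpr (le_trans (ht x hx) hb)
  rw [hzero] at h
  by_cases hca : c < a <;> simp [hca] at h

end MultisetAux

namespace JC3Aux

variable {n₁ n₂ n₃ : ℕ}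
open Sum

abbrev V (n₁ n₂ n₃ : ℕ) := Fin 1 ⊕ (Fin n₁ ⊕ (Fin n₂ ⊕ Fin n₃))

lemma adj_lr (a : Fin 1) (w : Fin n₁ ⊕ (Fin n₂ ⊕ Fin n₃)) :
    (joinCliques3 n₁ n₂ n₃).Adj (inl a) (inr w) := trivial

lemma adj_rl (a : Fin 1) (w : Fin n₁ ⊕ (Fin n₂ ⊕ Fin n₃)) :
    (joinCliques3 n₁ n₂ n₃).Adj (inr w) (inl a) := trivial

lemma adj_11 {i j : Fin n₁} (h : i ≠ j) :
    (joinCliques3 n₁ n₂ n₃).Adj (inr (inl i)) (inr (inl j)) := h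

lemma adj_22 {i j : Fin n₂} (h : i ≠ j) :
    (joinCliques3 n₁ n₂ n₃).Adj (inr (inr (inl i))) (inr (inr (inl j))) := h

lemma adj_33 {i j : Fin n₃} (h : i ≠ j) :
    (joinCliques3 n₁ n₂ n₃).Adj (inr (inr (inr i))) (inr (inr (inr j))) := h

lemma delta_sum {k : ℕ} (f : Fin k → ℝ) (i : Fin k) :
    (∑ j, if i = j then (0:ℝ) else f j) = (∑ j, f j) - f i := by
  have h : ∀ j, (if i = j then (0:ℝ) else f j) = f j - (if i = j then f j else 0) := by
    intro j; by_cases h : i = j <;> simp [h]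
  simp_rw [h]
  rw [Finset.sum_sub_distrib, Finset.sum_ite_eq]
  simp

lemma dist_two {u v : V n₁ n₂ n₃} (huv : u ≠ v) (hadj : ¬ (joinCliques3 n₁ n₂ n₃).Adj u v) :
    (joinCliques3 n₁ n₂ n₃).dist u v = 2 := by
  obtain ⟨u', rfl⟩ : ∃ u', u = inr u' := by
    rcases u with a | u'
    · rcases v with b | w
      · exact absurd (show (inl a : V n₁ n₂ n₃) = inl b by
            rw [Subsingleton.elim a b]) huv
      · exact absurd (adj_lr a w) hadj
    · exact ⟨u', rfl⟩
  obtain ⟨v', rfl⟩ : ∃ v', v = inr v' := by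
    rcases v with b | v'
    · exact absurd (adj_rl b u') hadj
    · exact ⟨v', rfl⟩
  have hle : (joinCliques3 n₁ n₂ n₃).dist (inr u') (inr v') ≤ 2 := by
    have h2 := SimpleGraph.dist_le (SimpleGraph.Walk.cons (adj_rl 0 u')
      (SimpleGraph.Walk.cons (adj_lr 0 v') SimpleGraph.Walk.nil))
    simp only [SimpleGraph.Walk.length_cons, SimpleGraph.Walk.length_nil] at h2
    omega
  have hne0 : (joinCliques3 n₁ n₂ n₃).dist (inr u') (inr v') ≠ 0 := by
    rw [Ne, SimpleGraph.dist_eq_zero_iff_eq_or_not_reachable]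
    push_neg
    exact ⟨huv, (SimpleGraph.Walk.cons (adj_rl 0 u')
      (SimpleGraph.Walk.cons (adj_lr 0 v') SimpleGraph.Walk.nil)).reachable⟩
  have hne1 : (joinCliques3 n₁ n₂ n₃).dist (inr u') (inr v') ≠ 1 := by
    rw [Ne, SimpleGraph.dist_eq_one_iff_adj]
    exact hadj
  omega

lemma dist_adj {u v : V n₁ n₂ n₃} (h : (joinCliques3 n₁ n₂ n₃).Adj u v) :
    (joinCliques3 n₁ n₂ n₃).dist u v = 1 :=
  SimpleGraph.dist_eq_one_iff_adj.mpr h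

section entries
variable (n₁ n₂ n₃ : ℕ)

lemma e_ll (a b : Fin 1) : distMatrix (joinCliques3 n₁ n₂ n₃) (inl a) (inl b) = 0 := by
  have : a = b := Subsingleton.elim a b
  subst this
  simp [distMatrix]

lemma e_lr (a : Fin 1) (w : Fin n₁ ⊕ (Fin n₂ ⊕ Fin n₃)) :
    distMatrix (joinCliques3 n₁ n₂ n₃) (inl a) (inr w) = 1 := by
  simp [distMatrix, dist_adj (adj_lr a w)]

lemma e_rl (a : Fin 1) (w : Fin n₁ ⊕ (Fin n₂ ⊕ Fin n₃)) :
    distMatrix (joinCliques3 n₁ n₂ n₃) (inr w) (inl a) = 1 := by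
  simp [distMatrix, dist_adj (adj_rl a w)]

lemma e_same {k : ℕ} (emb : Fin k → Fin n₁ ⊕ (Fin n₂ ⊕ Fin n₃))
    (hadj : ∀ i j : Fin k, i ≠ j → (joinCliques3 n₁ n₂ n₃).Adj (inr (emb i)) (inr (emb j)))
    (i j : Fin k) :
    distMatrix (joinCliques3 n₁ n₂ n₃) (inr (emb i)) (inr (emb j))
      = if i = j then 0 else 1 := by
  by_cases h : i = j
  · subst h; simp [distMatrix]
  · simp [distMatrix, h, dist_adj (hadj i j h)]

lemma e_cross (w w' : Fin n₁ ⊕ (Fin n₂ ⊕ Fin n₃)) (hne : w ≠ w')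
    (hadj : ¬ (joinCliques3 n₁ n₂ n₃).Adj (inr w) (inr w')) :
    distMatrix (joinCliques3 n₁ n₂ n₃) (inr w) (inr w') = 2 := by
  simp [distMatrix, dist_two (by simpa using hne) hadj]

end entries

section form
open Matrix
variable {n₁ n₂ n₃ : ℕ} (x : V n₁ n₂ n₃ → ℝ)

lemma form_eq :
    x ⬝ᵥ (distMatrix (joinCliques3 n₁ n₂ n₃) *ᵥ x) =
      2 * x (inl 0) * ((∑ i, x (inr (inl i))) + (∑ i, x (inr (inr (inl i))))
          + (∑ i, x (inr (inr (inr i)))))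
      + 2 * ((∑ i, x (inr (inl i))) + (∑ i, x (inr (inr (inl i))))
          + (∑ i, x (inr (inr (inr i)))))^2
      - ((∑ i, x (inr (inl i)))^2 + (∑ i, x (inr (inr (inl i))))^2
          + (∑ i, x (inr (inr (inr i))))^2)
      - ((∑ i, x (inr (inl i))^2) + (∑ i, x (inr (inr (inl i)))^2)
          + (∑ i, x (inr (inr (inr i)))^2)) := by
  set D := distMatrix (joinCliques3 n₁ n₂ n₃) with hD
  set s1 := ∑ i, x (inr (inl i)) with hs1
  set s2 := ∑ i, x (inr (inr (inl i))) with hs2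
  set s3 := ∑ i, x (inr (inr (inr i))) with hs3
  have h11 : ∀ i j : Fin n₁, D (inr (inl i)) (inr (inl j)) = if i = j then 0 else 1 :=
    e_same n₁ n₂ n₃ inl (fun i j h => adj_11 h)
  have h22 : ∀ i j : Fin n₂, D (inr (inr (inl i))) (inr (inr (inl j))) = if i = j then 0 else 1 :=
    e_same n₁ n₂ n₃ (fun i => inr (inl i)) (fun i j h => adj_22 h)
  have h33 : ∀ i j : Fin n₃, D (inr (inr (inr i))) (inr (inr (inr j))) = if i = j then 0 else 1 :=
    e_same n₁ n₂ n₃ (fun i => inr (inr i)) (fun i j h => adj_33 h)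
  have h12 : ∀ (i : Fin n₁) (j : Fin n₂), D (inr (inl i)) (inr (inr (inl j))) = 2 :=
    fun i j => e_cross n₁ n₂ n₃ _ _ (by simp) (fun h => h)
  have h13 : ∀ (i : Fin n₁) (j : Fin n₃), D (inr (inl i)) (inr (inr (inr j))) = 2 :=
    fun i j => e_cross n₁ n₂ n₃ _ _ (by simp) (fun h => h)
  have h21 : ∀ (i : Fin n₂) (j : Fin n₁), D (inr (inr (inl i))) (inr (inl j)) = 2 :=
    fun i j => e_cross n₁ n₂ n₃ _ _ (by simp) (fun h => h)
  have h23 : ∀ (i : Fin n₂) (j : Fin n₃), D (inr (inr (inl i))) (inr (inr (inr j))) = 2 :=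
    fun i j => e_cross n₁ n₂ n₃ _ _ (by simp) (fun h => h)
  have h31 : ∀ (i : Fin n₃) (j : Fin n₁), D (inr (inr (inr i))) (inr (inl j)) = 2 :=
    fun i j => e_cross n₁ n₂ n₃ _ _ (by simp) (fun h => h)
  have h32 : ∀ (i : Fin n₃) (j : Fin n₂), D (inr (inr (inr i))) (inr (inr (inl j))) = 2 :=
    fun i j => e_cross n₁ n₂ n₃ _ _ (by simp) (fun h => h)
  have hrow : ∀ u, (D *ᵥ x) u = ∑ v, D u v * x v := fun u => rfl
  have hll : ∀ (a b : Fin 1), D (inl a) (inl b) = 0 := e_ll n₁ n₂ n₃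
  have hlr : ∀ (a : Fin 1) w, D (inl a) (inr w) = 1 := e_lr n₁ n₂ n₃
  have hrl : ∀ w (a : Fin 1), D (inr w) (inl a) = 1 := fun w a => e_rl n₁ n₂ n₃ a w
  have hcen : (D *ᵥ x) (inl 0) = s1 + s2 + s3 := by
    rw [hrow]
    rw [Fintype.sum_sum_type, Fintype.sum_sum_type, Fintype.sum_sum_type]
    simp [hll, hlr, hs1, hs2, hs3]
    ring
  have hb1 : ∀ i : Fin n₁, (D *ᵥ x) (inr (inl i))
      = x (inl 0) + (s1 - x (inr (inl i))) + 2*s2 + 2*s3 := by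
    intro i
    rw [hrow]
    rw [Fintype.sum_sum_type, Fintype.sum_sum_type, Fintype.sum_sum_type]
    simp only [hrl, h11, h12, h13, one_mul, ite_mul, zero_mul, two_mul]
    rw [delta_sum (fun j => x (inr (inl j))) i]
    rw [Fin.sum_univ_one]
    simp [hs1, hs2, hs3, Finset.sum_add_distrib]
    ring
  have hb2 : ∀ i : Fin n₂, (D *ᵥ x) (inr (inr (inl i)))
      = x (inl 0) + 2*s1 + (s2 - x (inr (inr (inl i)))) + 2*s3 := by
    intro i
    rw [hrow]
    rw [Fintype.sum_sum_type, Fintype.sum_sum_type, Fintype.sum_sum_type]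
    simp only [hrl, h21, h22, h23, one_mul, ite_mul, zero_mul, two_mul]
    rw [delta_sum (fun j => x (inr (inr (inl j)))) i]
    rw [Fin.sum_univ_one]
    simp [hs1, hs2, hs3, Finset.sum_add_distrib]
    ring
  have hb3 : ∀ i : Fin n₃, (D *ᵥ x) (inr (inr (inr i)))
      = x (inl 0) + 2*s1 + 2*s2 + (s3 - x (inr (inr (inr i)))) := by
    intro i
    rw [hrow]
    rw [Fintype.sum_sum_type, Fintype.sum_sum_type, Fintype.sum_sum_type]
    simp only [hrl, h31, h32, h33, one_mul, ite_mul, zero_mul, two_mul]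
    rw [delta_sum (fun j => x (inr (inr (inr j)))) i]
    rw [Fin.sum_univ_one]
    simp [hs1, hs2, hs3, Finset.sum_add_distrib]
    ring
  have hdot : x ⬝ᵥ (D *ᵥ x) = ∑ u, x u * (D *ᵥ x) u := rfl
  rw [hdot, Fintype.sum_sum_type, Fintype.sum_sum_type, Fintype.sum_sum_type,
    Fin.sum_univ_one]
  rw [hcen]
  have e1 : ∑ i : Fin n₁, x (inr (inl i)) * (D *ᵥ x) (inr (inl i))
      = s1 * (x (inl 0) + s1 + 2*s2 + 2*s3) - ∑ i, x (inr (inl i))^2 := by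
    calc ∑ i : Fin n₁, x (inr (inl i)) * (D *ᵥ x) (inr (inl i))
        = ∑ i : Fin n₁, (x (inr (inl i)) * (x (inl 0) + s1 + 2*s2 + 2*s3)
            - x (inr (inl i))^2) :=
          Finset.sum_congr rfl fun i _ => by rw [hb1 i]; ring
      _ = _ := by rw [Finset.sum_sub_distrib, ← Finset.sum_mul, ← hs1]
  have e2 : ∑ i : Fin n₂, x (inr (inr (inl i))) * (D *ᵥ x) (inr (inr (inl i)))
      = s2 * (x (inl 0) + 2*s1 + s2 + 2*s3) - ∑ i, x (inr (inr (inl i)))^2 := by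
    calc ∑ i : Fin n₂, x (inr (inr (inl i))) * (D *ᵥ x) (inr (inr (inl i)))
        = ∑ i : Fin n₂, (x (inr (inr (inl i))) * (x (inl 0) + 2*s1 + s2 + 2*s3)
            - x (inr (inr (inl i)))^2) :=
          Finset.sum_congr rfl fun i _ => by rw [hb2 i]; ring
      _ = _ := by rw [Finset.sum_sub_distrib, ← Finset.sum_mul, ← hs2]
  have e3 : ∑ i : Fin n₃, x (inr (inr (inr i))) * (D *ᵥ x) (inr (inr (inr i)))
      = s3 * (x (inl 0) + 2*s1 + 2*s2 + s3) - ∑ i, x (inr (inr (inr i)))^2 := by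
    calc ∑ i : Fin n₃, x (inr (inr (inr i))) * (D *ᵥ x) (inr (inr (inr i)))
        = ∑ i : Fin n₃, (x (inr (inr (inr i))) * (x (inl 0) + 2*s1 + 2*s2 + s3)
            - x (inr (inr (inr i)))^2) :=
          Finset.sum_congr rfl fun i _ => by rw [hb3 i]; ring
      _ = _ := by rw [Finset.sum_sub_distrib, ← Finset.sum_mul, ← hs3]
  rw [e1, e2, e3]
  ring

lemma dot_self_eq :
    x ⬝ᵥ x = x (inl 0)^2 + ((∑ i, x (inr (inl i))^2) + (∑ i, x (inr (inr (inl i)))^2)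
      + (∑ i, x (inr (inr (inr i)))^2)) := by
  have hdot : x ⬝ᵥ x = ∑ u, x u * x u := rfl
  rw [hdot, Fintype.sum_sum_type, Fintype.sum_sum_type, Fintype.sum_sum_type,
    Fin.sum_univ_one]
  simp_rw [← sq]
  ring

lemma w_dot (y : V n₁ n₂ n₃ → ℝ) :
    (Sum.elim (fun _ => (1:ℝ)) (fun _ => 17/10) : V n₁ n₂ n₃ → ℝ) ⬝ᵥ y
      = y (inl 0) + (17/10) * ((∑ i, y (inr (inl i))) + (∑ i, y (inr (inr (inl i))))
          + (∑ i, y (inr (inr (inr i))))) := by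
  have hdot : (Sum.elim (fun _ => (1:ℝ)) (fun _ => 17/10) : V n₁ n₂ n₃ → ℝ) ⬝ᵥ y
      = ∑ u, (Sum.elim (fun _ => (1:ℝ)) (fun _ => 17/10) : V n₁ n₂ n₃ → ℝ) u * y u := rfl
  rw [hdot, Fintype.sum_sum_type, Fintype.sum_sum_type, Fintype.sum_sum_type,
    Fin.sum_univ_one]
  simp only [Sum.elim_inl, Sum.elim_inr, one_mul]
  rw [← Finset.mul_sum, ← Finset.mul_sum, ← Finset.mul_sum]
  ring

end form

end JC3Aux


lemma aux_upper_alg (s1 s2 s3 q1 q2 q3 x0 : ℝ) (hx0 : x0 + (17/10)*(s1+s2+s3) = 0)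
    (h1 : 0 ≤ q1) (h2 : 0 ≤ q2) (h3 : 0 ≤ q3)
    (hpos : 0 < x0^2 + (q1+q2+q3)) :
    2*x0*(s1+s2+s3) + 2*(s1+s2+s3)^2 - (s1^2+s2^2+s3^2) - (q1+q2+q3)
      < -0.5858 * (x0^2 + (q1+q2+q3)) := by
  have hx0' : x0 = -(17/10)*(s1+s2+s3) := by linarith
  subst hx0'
  rcases eq_or_lt_of_le (by positivity : (0:ℝ) ≤ s1^2+s2^2+s3^2) with h | h
  · have hs1 : s1 = 0 := by nlinarith [sq_nonneg s1, sq_nonneg s2, sq_nonneg s3]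
    have hs2 : s2 = 0 := by nlinarith [sq_nonneg s1, sq_nonneg s2, sq_nonneg s3]
    have hs3 : s3 = 0 := by nlinarith [sq_nonneg s1, sq_nonneg s2, sq_nonneg s3]
    rw [hs1, hs2, hs3] at hpos ⊢
    norm_num at hpos ⊢
    linarith
  · nlinarith [sq_nonneg (s1-s2), sq_nonneg (s1-s3), sq_nonneg (s2-s3)]

lemma aux_sq_ite (P : Prop) [Decidable P] : ((if P then (1:ℝ) else 0))^2 = if P then 1 else 0 := by
  split <;> norm_num

theorem secondDistEig_joinCliques3 (n₁ n₂ n₃ : ℕ) (h₁ : 1 ≤ n₁) (h₂ : 1 ≤ n₂) (h₃ : 1 ≤ n₃) :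
    distEig (joinCliques3 n₁ n₂ n₃) 2 ∈ Set.Ioo (-1 : ℝ) (-0.5858) := by
  classical
  open Sum Matrix JC3Aux in
  have hM : (distMatrix (joinCliques3 n₁ n₂ n₃)).IsHermitian :=
    distMatrix_isHermitian (joinCliques3 n₁ n₂ n₃)
  set μ : V n₁ n₂ n₃ → ℝ := hM.eigenvalues with hμ
  -- cardinality
  have hm2 : 2 ≤ Multiset.card (distEigMultiset (joinCliques3 n₁ n₂ n₃)) := by
    rw [distEigMultiset, Multiset.card_map]
    have : Multiset.card Finset.univ.val = Fintype.card (V n₁ n₂ n₃) := Finset.card_univ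
    rw [this]
    simp only [Fintype.card_sum, Fintype.card_fin]
    omega
  -- eigenvalue-level bounds
  have hupper : ∀ i j, i ≠ j → ¬((-0.5858:ℝ) ≤ μ i ∧ (-0.5858:ℝ) ≤ μ j) := by
    apply aux_key1 hM (Sum.elim (fun _ => (1:ℝ)) (fun _ => 17/10))
    intro x hx hwx
    rw [w_dot x] at hwx
    rw [form_eq x, dot_self_eq x]
    refine aux_upper_alg _ _ _ _ _ _ _ hwx ?_ ?_ ?_ ?_
    · exact Finset.sum_nonneg fun i _ => sq_nonneg _
    · exact Finset.sum_nonneg fun i _ => sq_nonneg _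
    · exact Finset.sum_nonneg fun i _ => sq_nonneg _
    · rw [← dot_self_eq x]
      exact aux_dot_self_pos hx
  have hlower : ∃ i j, i ≠ j ∧ (-1:ℝ) < μ i ∧ (-1:ℝ) < μ j := by
    set i1 : Fin n₁ := ⟨0, h₁⟩
    set i2 : Fin n₂ := ⟨0, h₂⟩
    set i3 : Fin n₃ := ⟨0, h₃⟩
    set xc : V n₁ n₂ n₃ → ℝ := Sum.elim (fun _ => (1:ℝ)) (fun _ => 0) with hxc
    set yv : V n₁ n₂ n₃ → ℝ := Sum.elim (fun _ => (0:ℝ))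
      (Sum.elim (fun i => if i = i1 then 1 else 0)
        (Sum.elim (fun i => if i = i2 then 1 else 0) (fun i => if i = i3 then 1 else 0)))
      with hyv
    have hxcne : xc ≠ 0 := by
      intro h0
      have := congrFun h0 (inl 0)
      simp [hxc] at this
    apply aux_key2 hM xc yv (-1) hxcne
    intro a b hab
    set z : V n₁ n₂ n₃ → ℝ := a • xc + b • yv with hz
    have hz0 : z (inl 0) = a := by simp [hz, hxc, hyv]
    have hzs1 : ∑ i : Fin n₁, z (inr (inl i)) = b := by
      simp [hz, hxc, hyv, Finset.sum_ite_eq', mul_ite]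
    have hzs2 : ∑ i : Fin n₂, z (inr (inr (inl i))) = b := by
      simp [hz, hxc, hyv, Finset.sum_ite_eq', mul_ite]
    have hzs3 : ∑ i : Fin n₃, z (inr (inr (inr i))) = b := by
      simp [hz, hxc, hyv, Finset.sum_ite_eq', mul_ite]
    have hzq1 : ∑ i : Fin n₁, z (inr (inl i))^2 = b^2 := by
      simp [hz, hxc, hyv, mul_pow, aux_sq_ite, Finset.sum_ite_eq', mul_ite]
    have hzq2 : ∑ i : Fin n₂, z (inr (inr (inl i)))^2 = b^2 := by
      simp [hz, hxc, hyv, mul_pow, aux_sq_ite, Finset.sum_ite_eq', mul_ite]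
    have hzq3 : ∑ i : Fin n₃, z (inr (inr (inr i)))^2 = b^2 := by
      simp [hz, hxc, hyv, mul_pow, aux_sq_ite, Finset.sum_ite_eq', mul_ite]
    rw [form_eq z, dot_self_eq z, hz0, hzs1, hzs2, hzs3, hzq1, hzq2, hzq3]
    rcases not_and_or.mp hab with ha | hb
    · rcases eq_or_ne b 0 with rfl | hb
      · have ha2 : a^2 > 0 := by
          have : a ≠ 0 := ha
          positivity
        nlinarith
      · have hb2 : b^2 > 0 := by positivity
        nlinarith [sq_nonneg (a+3*b)]
    · have hb2 : b^2 > 0 := by positivity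
      nlinarith [sq_nonneg (a+3*b)]
  -- translate to multiset counts
  have hcount : ∀ p : ℝ → Prop, ∀ hp : DecidablePred p,
      Multiset.card ((distEigMultiset (joinCliques3 n₁ n₂ n₃)).filter p)
        = (Finset.univ.filter (fun i => p (μ i))).card := by
    intro p hp
    rw [distEigMultiset, ← Multiset.countP_eq_card_filter, Multiset.countP_map]
    rfl
  constructor
  · -- lower bound
    have hge : 2 ≤ Multiset.card
        ((distEigMultiset (joinCliques3 n₁ n₂ n₃)).filter (fun x => (-1:ℝ) < x)) := by
      rw [hcount _ _]
      obtain ⟨i, j, hne, hi, hj⟩ := hlower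
      rw [Nat.succ_le_iff, Finset.one_lt_card]
      exact ⟨i, Finset.mem_filter.mpr ⟨Finset.mem_univ _, hi⟩,
        j, Finset.mem_filter.mpr ⟨Finset.mem_univ _, hj⟩, hne⟩
    have := aux_G2 hge
    rw [distEig]
    exact this
  · -- upper bound
    have hle : Multiset.card
        ((distEigMultiset (joinCliques3 n₁ n₂ n₃)).filter (fun x => (-0.5858:ℝ) ≤ x)) ≤ 1 := by
      rw [hcount _ _]
      by_contra hgt
      push_neg at hgt
      rw [Finset.one_lt_card] at hgt
      obtain ⟨i, hi, j, hj, hne⟩ := hgt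
      exact hupper i j hne ⟨(Finset.mem_filter.mp hi).2, (Finset.mem_filter.mp hj).2⟩
    have := aux_G1 hm2 hle
    rw [distEig]
    exact this
end

section
/- For integers n₁, n₂, n₃ ≥ 1, set n = n₁+n₂+n₃+1. The characteristic polynomial of the distance matrix of G₂ = K₁∨(K_{n₁}∪K_{n₂}∪K_{n₃}) satisfies det(λI_n − D(G₂)) = (λ+1)^{n−4}·g(λ), where g(λ) = λ⁴ − (n₁+n₂+n₃−3)λ³ − 3(n₁n₂+n₁n₃+n₂n₃+n₁+n₂+n₃−1)λ² − [5(n₁n₂+n₁n₃+n₂n₃+n₁n₂n₃) + 3(n₁+n₂+n₃) − 1]λ − 3n₁n₂n₃ − 2(n₁n₂+n₁n₃+n₂n₃) − (n₁+n₂+n₃). -/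
section Aux
open scoped Classical

abbrev Vt (n₁ n₂ n₃ : ℕ) := Fin 1 ⊕ (Fin n₁ ⊕ (Fin n₂ ⊕ Fin n₃))

def bIdx {n₁ n₂ n₃ : ℕ} : Vt n₁ n₂ n₃ → Fin 4
  | Sum.inl _ => 0
  | Sum.inr (Sum.inl _) => 1
  | Sum.inr (Sum.inr (Sum.inl _)) => 2
  | Sum.inr (Sum.inr (Sum.inr _)) => 3

lemma adj_iff {n₁ n₂ n₃ : ℕ} (u v : Vt n₁ n₂ n₃) :
    (joinCliques3 n₁ n₂ n₃).Adj u v ↔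
      u ≠ v ∧ (bIdx u = 0 ∨ bIdx v = 0 ∨ bIdx u = bIdx v) := by
  rcases u with a | (a | (a | a)) <;> rcases v with b | (b | (b | b)) <;>
    simp [joinCliques3, graphJoin, graphSum, bIdx, SimpleGraph.top_adj, Fin.ext_iff] <;> decide

lemma dist_eq {n₁ n₂ n₃ : ℕ} (u v : Vt n₁ n₂ n₃) :
    (joinCliques3 n₁ n₂ n₃).dist u v =
      if u = v then 0 else if (joinCliques3 n₁ n₂ n₃).Adj u v then 1 else 2 := by
  by_cases h : u = v
  · simp [h]
  by_cases ha : (joinCliques3 n₁ n₂ n₃).Adj u v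
  · simp [h, ha, SimpleGraph.dist_eq_one_iff_adj.mpr ha]
  · simp only [h, ha, if_false]
    -- u and v are both in the clique part
    have hu0 : bIdx u ≠ 0 ∨ bIdx v ≠ 0 := by
      by_contra hc
      push_neg at hc
      exact ha ((adj_iff u v).mpr ⟨h, Or.inl hc.1⟩)
    have hadj1 : (joinCliques3 n₁ n₂ n₃).Adj u (Sum.inl 0) ∨ u = Sum.inl 0 := by
      rcases u with a | a
      · right; exact congrArg Sum.inl (Subsingleton.elim a 0)
      · left; exact (adj_iff _ _).mpr ⟨by simp, Or.inr (Or.inl rfl)⟩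
    have hadj2 : (joinCliques3 n₁ n₂ n₃).Adj (Sum.inl 0) v ∨ v = Sum.inl 0 := by
      rcases v with b | b
      · right; exact congrArg Sum.inl (Subsingleton.elim b 0)
      · left; exact (adj_iff _ _).mpr ⟨by simp, Or.inl rfl⟩
    rcases hadj1 with h1 | h1
    · rcases hadj2 with h2 | h2
      · have hle : (joinCliques3 n₁ n₂ n₃).dist u v ≤ 2 := by
          have := SimpleGraph.dist_le (SimpleGraph.Walk.cons h1 (SimpleGraph.Walk.cons h2 SimpleGraph.Walk.nil))
          simpa using this
        have hne0 : (joinCliques3 n₁ n₂ n₃).dist u v ≠ 0 := by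
          simp only [ne_eq, SimpleGraph.dist_eq_zero_iff_eq_or_not_reachable]
          push_neg
          exact ⟨h, ⟨SimpleGraph.Walk.cons h1 (SimpleGraph.Walk.cons h2 SimpleGraph.Walk.nil)⟩⟩
        have hne1 : (joinCliques3 n₁ n₂ n₃).dist u v ≠ 1 := by
          rw [ne_eq, SimpleGraph.dist_eq_one_iff_adj]; exact ha
        omega
      · exact absurd ((adj_iff u v).mpr ⟨h, by rw [h2]; exact Or.inr (Or.inl rfl)⟩) ha
    · exact absurd ((adj_iff u v).mpr ⟨h, by rw [h1]; exact Or.inl rfl⟩) ha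

end Aux

open Matrix

noncomputable def Pm : Matrix (Fin 4) (Fin 4) ℝ := !![1,1,1,1;1,1,2,2;1,2,1,2;1,2,2,1]

noncomputable def Um {n₁ n₂ n₃ : ℕ} : Matrix (Vt n₁ n₂ n₃) (Fin 4) ℝ :=
  Matrix.of fun u k => if bIdx u = k then 1 else 0

noncomputable def Vm {n₁ n₂ n₃ : ℕ} : Matrix (Fin 4) (Vt n₁ n₂ n₃) ℝ :=
  Matrix.of fun k v => Pm k (bIdx v)

noncomputable def Qm (a b c : ℝ) : Matrix (Fin 4) (Fin 4) ℝ :=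
  !![1,a,b,c; 1,a,2*b,2*c; 1,2*a,b,2*c; 1,2*a,2*b,c]

lemma distMatrix_apply {n₁ n₂ n₃ : ℕ} (u v : Vt n₁ n₂ n₃) :
    distMatrix (joinCliques3 n₁ n₂ n₃) u v
      = Pm (bIdx u) (bIdx v) - if u = v then 1 else 0 := by
  classical
  rw [distMatrix, Matrix.of_apply, dist_eq]
  by_cases h : u = v
  · subst h
    rcases u with a | (a | (a | a)) <;> simp [Pm, bIdx]
  · by_cases ha : (joinCliques3 n₁ n₂ n₃).Adj u v
    · have := ((adj_iff u v).mp ha).2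
      simp only [h, ha, if_true, if_false]
      rcases this with h0 | h0 | h0 <;>
        rcases u with a | (a | (a | a)) <;> rcases v with b | (b | (b | b)) <;>
          simp_all [Pm, bIdx, Matrix.vecHead, Matrix.vecTail]
    · have hcond : ¬(bIdx u = 0 ∨ bIdx v = 0 ∨ bIdx u = bIdx v) := by
        intro hc; exact ha ((adj_iff u v).mpr ⟨h, hc⟩)
      push_neg at hcond
      obtain ⟨c1, c2, c3⟩ := hcond
      simp only [h, ha, if_false]
      rcases u with a | (a | (a | a)) <;> rcases v with b | (b | (b | b)) <;>
        simp_all [Pm, bIdx, Matrix.vecHead, Matrix.vecTail]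

lemma um_mul_vm {n₁ n₂ n₃ : ℕ} (u v : Vt n₁ n₂ n₃) :
    (Um * Vm) u v = Pm (bIdx u) (bIdx v) := by
  classical
  rw [Matrix.mul_apply]
  simp [Um, Vm, ite_mul, Finset.sum_ite_eq]

lemma vm_mul_um {n₁ n₂ n₃ : ℕ} :
    ((Vm (n₁ := n₁) (n₂ := n₂) (n₃ := n₃)) * Um (n₁ := n₁) (n₂ := n₂) (n₃ := n₃) :
      Matrix (Fin 4) (Fin 4) ℝ) = Qm (n₁ : ℝ) (n₂ : ℝ) (n₃ : ℝ) := by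
  classical
  ext k l
  rw [Matrix.mul_apply]
  rw [Fintype.sum_sum_type, Fintype.sum_sum_type, Fintype.sum_sum_type]
  simp only [Um, Vm, bIdx, Matrix.of_apply, mul_ite, mul_one, mul_zero,
    Finset.sum_const, Finset.card_univ, Fintype.card_fin, nsmul_eq_mul]
  fin_cases k <;> fin_cases l <;>
    simp [Pm, Qm, Matrix.vecHead, Matrix.vecTail] <;> ring

lemma matrix_decomp {n₁ n₂ n₃ : ℕ} (lam : ℝ) :
    lam • (1 : Matrix (Vt n₁ n₂ n₃) (Vt n₁ n₂ n₃) ℝ) - distMatrix (joinCliques3 n₁ n₂ n₃)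
      = (lam + 1) • 1 - Um * Vm := by
  classical
  ext u v
  rw [Matrix.sub_apply, Matrix.sub_apply, um_mul_vm, distMatrix_apply,
    Matrix.smul_apply, Matrix.smul_apply, Matrix.one_apply]
  by_cases h : u = v <;> simp [h] <;> ring

lemma det4 (lam a b c : ℝ) :
    ((lam + 1) • (1 : Matrix (Fin 4) (Fin 4) ℝ) - Qm a b c).det =
      lam ^ 4 - (a + b + c - 3) * lam ^ 3
        - 3 * (a * b + a * c + b * c + a + b + c - 1) * lam ^ 2
        - (5 * (a * b + a * c + b * c + a * b * c) + 3 * (a + b + c) - 1) * lam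
        - 3 * a * b * c - 2 * (a * b + a * c + b * c) - (a + b + c) := by
  have h : (lam + 1) • (1 : Matrix (Fin 4) (Fin 4) ℝ) - Qm a b c =
      !![lam, -a, -b, -c; -1, lam + 1 - a, -(2*b), -(2*c);
         -1, -(2*a), lam + 1 - b, -(2*c); -1, -(2*a), -(2*b), lam + 1 - c] := by
    ext i j
    fin_cases i <;> fin_cases j <;>
      simp [Qm, Matrix.one_apply, Matrix.vecHead, Matrix.vecTail] <;> ring
  rw [h, Matrix.det_succ_row_zero]
  have e1 : Fin.succAbove (1 : Fin 4) (2 : Fin 3) = 3 := by decide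
  have e2 : Fin.succAbove (2 : Fin 4) (2 : Fin 3) = 3 := by decide
  have e3 : Fin.succAbove (3 : Fin 4) (2 : Fin 3) = 2 := by decide
  simp [Fin.sum_univ_succ, Matrix.det_fin_three, Matrix.submatrix,
    Matrix.vecHead, Matrix.vecTail, e1, e2, e3]
  ring

lemma card_vt (n₁ n₂ n₃ : ℕ) : Fintype.card (Vt n₁ n₂ n₃) = n₁ + n₂ + n₃ + 1 := by
  simp [Fintype.card_sum]; omega

lemma key (n₁ n₂ n₃ : ℕ) (h₁ : 1 ≤ n₁) (h₂ : 1 ≤ n₂) (h₃ : 1 ≤ n₃)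
    (lam : ℝ) (hl : lam + 1 ≠ 0) :
    (lam • (1 : Matrix (Vt n₁ n₂ n₃) (Vt n₁ n₂ n₃) ℝ)
        - distMatrix (joinCliques3 n₁ n₂ n₃)).det =
      (lam + 1) ^ (n₁ + n₂ + n₃ + 1 - 4) *
        (lam ^ 4 - ((n₁ : ℝ) + n₂ + n₃ - 3) * lam ^ 3
          - 3 * ((n₁ : ℝ) * n₂ + n₁ * n₃ + n₂ * n₃ + n₁ + n₂ + n₃ - 1) * lam ^ 2
          - (5 * ((n₁ : ℝ) * n₂ + n₁ * n₃ + n₂ * n₃ + n₁ * n₂ * n₃)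
              + 3 * ((n₁ : ℝ) + n₂ + n₃) - 1) * lam
          - 3 * (n₁ : ℝ) * n₂ * n₃ - 2 * ((n₁ : ℝ) * n₂ + n₁ * n₃ + n₂ * n₃)
          - ((n₁ : ℝ) + n₂ + n₃)) := by
  classical
  set c : ℝ := (lam + 1)⁻¹ with hc
  rw [matrix_decomp]
  have hsplit : (lam + 1) • (1 : Matrix (Vt n₁ n₂ n₃) (Vt n₁ n₂ n₃) ℝ) - Um * Vm
      = (lam + 1) • (1 - (c • Um) * Vm) := by
    rw [smul_sub, Matrix.smul_mul, smul_smul, mul_inv_cancel₀ hl, one_smul]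
  rw [hsplit, Matrix.det_smul, Matrix.det_one_sub_mul_comm, Matrix.mul_smul,
    vm_mul_um]
  have hsm : ((lam + 1) • (1 - c • Qm (n₁:ℝ) n₂ n₃)).det
      = (lam + 1) ^ 4 * (1 - c • Qm (n₁:ℝ) n₂ n₃).det := by
    rw [Matrix.det_smul]; norm_num
  have heq : (lam + 1) • (1 - c • Qm (n₁:ℝ) n₂ n₃)
      = (lam + 1) • (1 : Matrix (Fin 4) (Fin 4) ℝ) - Qm (n₁:ℝ) n₂ n₃ := by
    rw [smul_sub, smul_smul, mul_inv_cancel₀ hl, one_smul]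
  have h4 : (lam + 1) ^ 4 * (1 - c • Qm (n₁:ℝ) n₂ n₃).det
      = ((lam + 1) • (1 : Matrix (Fin 4) (Fin 4) ℝ) - Qm (n₁:ℝ) n₂ n₃).det := by
    rw [← hsm, heq]
  have hp : (lam + 1) ^ (Fintype.card (Vt n₁ n₂ n₃))
      = (lam + 1) ^ (n₁ + n₂ + n₃ + 1 - 4) * (lam + 1) ^ 4 := by
    rw [← pow_add]; congr 1; rw [card_vt]; omega
  rw [hp, mul_assoc, h4, det4]

theorem charpoly_joinCliques3 (n₁ n₂ n₃ : ℕ) (h₁ : 1 ≤ n₁) (h₂ : 1 ≤ n₂) (h₃ : 1 ≤ n₃)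
    (lam : ℝ) :
    (lam • (1 : Matrix (Fin 1 ⊕ (Fin n₁ ⊕ (Fin n₂ ⊕ Fin n₃)))
          (Fin 1 ⊕ (Fin n₁ ⊕ (Fin n₂ ⊕ Fin n₃))) ℝ)
        - distMatrix (joinCliques3 n₁ n₂ n₃)).det =
      (lam + 1) ^ (n₁ + n₂ + n₃ + 1 - 4) *
        (lam ^ 4 - ((n₁ : ℝ) + n₂ + n₃ - 3) * lam ^ 3
          - 3 * ((n₁ : ℝ) * n₂ + n₁ * n₃ + n₂ * n₃ + n₁ + n₂ + n₃ - 1) * lam ^ 2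
          - (5 * ((n₁ : ℝ) * n₂ + n₁ * n₃ + n₂ * n₃ + n₁ * n₂ * n₃)
              + 3 * ((n₁ : ℝ) + n₂ + n₃) - 1) * lam
          - 3 * (n₁ : ℝ) * n₂ * n₃ - 2 * ((n₁ : ℝ) * n₂ + n₁ * n₃ + n₂ * n₃)
          - ((n₁ : ℝ) + n₂ + n₃)) := by
  classical
  set F : ℝ → ℝ := fun l =>
    (l • (1 : Matrix (Vt n₁ n₂ n₃) (Vt n₁ n₂ n₃) ℝ)
        - distMatrix (joinCliques3 n₁ n₂ n₃)).det with hF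
  set G : ℝ → ℝ := fun l =>
    (l + 1) ^ (n₁ + n₂ + n₃ + 1 - 4) *
        (l ^ 4 - ((n₁ : ℝ) + n₂ + n₃ - 3) * l ^ 3
          - 3 * ((n₁ : ℝ) * n₂ + n₁ * n₃ + n₂ * n₃ + n₁ + n₂ + n₃ - 1) * l ^ 2
          - (5 * ((n₁ : ℝ) * n₂ + n₁ * n₃ + n₂ * n₃ + n₁ * n₂ * n₃)
              + 3 * ((n₁ : ℝ) + n₂ + n₃) - 1) * l
          - 3 * (n₁ : ℝ) * n₂ * n₃ - 2 * ((n₁ : ℝ) * n₂ + n₁ * n₃ + n₂ * n₃)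
          - ((n₁ : ℝ) + n₂ + n₃)) with hG
  have hFc : Continuous F := by
    apply Continuous.matrix_det
    exact (continuous_id.smul continuous_const).sub continuous_const
  have hGc : Continuous G := by fun_prop
  have heq : F = G := by
    apply hFc.ext_on (dense_compl_singleton (-1 : ℝ)) hGc
    intro x hx
    have hx' : x + 1 ≠ 0 := by
      intro h
      exact hx (by simp [Set.mem_singleton_iff]; linarith)
    exact key n₁ n₂ n₃ h₁ h₂ h₃ x hx'
  exact congrFun heq lam
end

section
/- For integers n₁, n₂, n₃, n₄ ≥ 1, set n = n₁+n₂+n₃+n₄+1. The characteristic polynomial of the distance matrix of G = K₁∨(K_{n₁}∪K_{n₂}∪K_{n₃}∪K_{n₄}) satisfies det(λI_n − D(G)) = (λ+1)^{n−5}·h(λ), where h(λ) = λ⁵ − (e₁−4)λ⁴ − [3e₂ + 4e₁ − 6]λ³ − [5e₃ + 8e₂ + 6e₁ − 4]λ² − [7e₄ + 8e₃ + 7e₂ + 4e₁ − 1]λ − 4e₄ − 3e₃ − 2e₂ − e₁, with e₁, e₂, e₃, e₄ denoting the elementary symmetric polynomials of degree 1, 2, 3, 4 in n₁, n₂, n₃,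 n₄. -/
open Matrix in
lemma det_smul_one_sub_mul {m n : Type*} [Fintype m] [Fintype n] [DecidableEq m] [DecidableEq n]
    (h : Fintype.card n ≤ Fintype.card m) (A : Matrix m n ℝ) (B : Matrix n m ℝ) (x : ℝ) :
    (x • (1 : Matrix m m ℝ) - A * B).det =
      x ^ (Fintype.card m - Fintype.card n) * (x • (1 : Matrix n n ℝ) - B * A).det := by
  have hcont1 : Continuous fun x : ℝ => (x • (1 : Matrix m m ℝ) - A * B).det := by
    apply Continuous.matrix_det; fun_prop
  have hcont2 : Continuous fun x : ℝ =>
      x ^ (Fintype.card m - Fintype.card n) * (x • (1 : Matrix n n ℝ) - B * A).det := by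
    apply Continuous.mul (by fun_prop)
    apply Continuous.matrix_det; fun_prop
  have key : Set.EqOn (fun x : ℝ => (x • (1 : Matrix m m ℝ) - A * B).det)
      (fun x : ℝ => x ^ (Fintype.card m - Fintype.card n) *
        (x • (1 : Matrix n n ℝ) - B * A).det) ({0}ᶜ : Set ℝ) := by
    intro x hx
    have hx0 : x ≠ 0 := hx
    have e1 : x • (1 : Matrix m m ℝ) - A * B = x • ((1 : Matrix m m ℝ) - A * (x⁻¹ • B)) := by
      rw [smul_sub, Matrix.mul_smul, smul_smul, mul_inv_cancel₀ hx0, one_smul]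
    have e2 : x • (1 : Matrix n n ℝ) - B * A = x • ((1 : Matrix n n ℝ) - (x⁻¹ • B) * A) := by
      rw [smul_sub, Matrix.smul_mul, smul_smul, mul_inv_cancel₀ hx0, one_smul]
    show (x • (1 : Matrix m m ℝ) - A * B).det = x ^ (Fintype.card m - Fintype.card n) * (x • (1 : Matrix n n ℝ) - B * A).det
    rw [e1, e2, Matrix.det_smul, Matrix.det_smul, Matrix.det_one_sub_mul_comm]
    rw [← mul_assoc, ← pow_add, Nat.sub_add_cancel h]
  have := Continuous.ext_on (dense_compl_singleton 0) hcont1 hcont2 key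
  exact congrFun this x

section Dist
variable {n₁ n₂ n₃ n₄ : ℕ}

abbrev V4 (n₁ n₂ n₃ n₄ : ℕ) := Fin 1 ⊕ (Fin n₁ ⊕ (Fin n₂ ⊕ (Fin n₃ ⊕ Fin n₄)))

/-- part map -/
def part4 : V4 n₁ n₂ n₃ n₄ → Fin 5
  | Sum.inl _ => 0
  | Sum.inr (Sum.inl _) => 1
  | Sum.inr (Sum.inr (Sum.inl _)) => 2
  | Sum.inr (Sum.inr (Sum.inr (Sum.inl _))) => 3
  | Sum.inr (Sum.inr (Sum.inr (Sum.inr _))) => 4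

lemma joinCliques4_adj_iff (u v : V4 n₁ n₂ n₃ n₄) :
    (joinCliques4 n₁ n₂ n₃ n₄).Adj u v ↔
      u ≠ v ∧ (part4 u = part4 v ∨ part4 u = 0 ∨ part4 v = 0) := by
  rcases u with a | (a | (a | (a | a))) <;> rcases v with b | (b | (b | (b | b))) <;>
    simp only [joinCliques4, graphJoin, graphSum, SimpleGraph.top_adj, part4, ne_eq,
      Sum.inr.injEq, Sum.inl.injEq, not_false_eq_true, and_true, true_and, iff_true,
      not_true_eq_false, not_and, Fin.isValue] <;>
    simp [Subsingleton.elim (α := Fin 1), Fin.ext_iff (n := 5), eq_comm] <;> omega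

lemma joinCliques4_dist_two {u v : V4 n₁ n₂ n₃ n₄}
    (hne : u ≠ v) (hna : ¬ (joinCliques4 n₁ n₂ n₃ n₄).Adj u v) :
    (joinCliques4 n₁ n₂ n₃ n₄).dist u v = 2 := by
  set G := joinCliques4 n₁ n₂ n₃ n₄
  -- u and v must both be in the right part
  have hu : ∃ a, u = Sum.inr a := by
    rcases u with a | a
    · rcases v with b | b
      · exact absurd (by rw [Subsingleton.elim a b]) hne
      · exact absurd trivial hna
    · exact ⟨a, rfl⟩
  have hv : ∃ b, v = Sum.inr b := by
    rcases v with b | b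
    · rcases u with a | a
      · exact absurd (by rw [Subsingleton.elim a b]) hne
      · exact absurd trivial hna
    · exact ⟨b, rfl⟩
  obtain ⟨a, rfl⟩ := hu
  obtain ⟨b, rfl⟩ := hv
  have h1 : G.Adj (Sum.inr a) (Sum.inl (0 : Fin 1)) := trivial
  have h2 : G.Adj (Sum.inl (0 : Fin 1)) (Sum.inr b) := trivial
  have hle : G.dist (Sum.inr a) (Sum.inr b) ≤ 2 := by
    have := SimpleGraph.dist_le
      (SimpleGraph.Walk.cons h1 (SimpleGraph.Walk.cons h2 SimpleGraph.Walk.nil))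
    simpa [SimpleGraph.Walk.length_cons] using this
  have hr : G.Reachable (Sum.inr a) (Sum.inr b) :=
    ⟨SimpleGraph.Walk.cons h1 (SimpleGraph.Walk.cons h2 SimpleGraph.Walk.nil)⟩
  have h0 : G.dist (Sum.inr a) (Sum.inr b) ≠ 0 :=
    fun h => hne (hr.dist_eq_zero_iff.mp h)
  have hone : G.dist (Sum.inr a) (Sum.inr b) ≠ 1 :=
    fun h => hna (SimpleGraph.dist_eq_one_iff_adj.mp h)
  omega

end Dist

section Mat
variable {n₁ n₂ n₃ n₄ : ℕ}

def S5 : Matrix (Fin 5) (Fin 5) ℝ :=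
  Matrix.of fun i j => if i = j ∨ i = 0 ∨ j = 0 then 1 else 2

def P4 (n₁ n₂ n₃ n₄ : ℕ) : Matrix (V4 n₁ n₂ n₃ n₄) (Fin 5) ℝ :=
  Matrix.of fun u i => if part4 u = i then 1 else 0

def Q4 (n₁ n₂ n₃ n₄ : ℕ) : Matrix (Fin 5) (V4 n₁ n₂ n₃ n₄) ℝ :=
  Matrix.of fun i u => if part4 u = i then 1 else 0

lemma PSQ_apply (u v : V4 n₁ n₂ n₃ n₄) :
    (P4 n₁ n₂ n₃ n₄ * (S5 * Q4 n₁ n₂ n₃ n₄)) u v = S5 (part4 u) (part4 v) := by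
  rw [Matrix.mul_apply]
  have h1 : ∀ i : Fin 5, (S5 * Q4 n₁ n₂ n₃ n₄) i v = S5 i (part4 v) := by
    intro i
    rw [Matrix.mul_apply]
    simp [Q4, mul_ite, Finset.sum_ite_eq', S5]
  simp only [h1, P4, Matrix.of_apply, ite_mul, one_mul, zero_mul]
  rw [Finset.sum_ite_eq (Finset.univ) (part4 u) (fun i => S5 i (part4 v))]
  simp

lemma decomp (lam : ℝ) :
    lam • (1 : Matrix (V4 n₁ n₂ n₃ n₄) (V4 n₁ n₂ n₃ n₄) ℝ)
        - distMatrix (joinCliques4 n₁ n₂ n₃ n₄) =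
      (lam + 1) • (1 : Matrix (V4 n₁ n₂ n₃ n₄) (V4 n₁ n₂ n₃ n₄) ℝ)
        - P4 n₁ n₂ n₃ n₄ * (S5 * Q4 n₁ n₂ n₃ n₄) := by
  ext u v
  simp only [Matrix.sub_apply, Matrix.smul_apply, PSQ_apply, smul_eq_mul, distMatrix,
    Matrix.of_apply]
  by_cases h : u = v
  · subst h
    simp [Matrix.one_apply_eq, S5]
  · have key : ((joinCliques4 n₁ n₂ n₃ n₄).dist u v : ℝ) = S5 (part4 u) (part4 v) := by
      by_cases ha : (joinCliques4 n₁ n₂ n₃ n₄).Adj u v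
      · rw [SimpleGraph.dist_eq_one_iff_adj.mpr ha]
        have := (joinCliques4_adj_iff u v).mp ha
        simp [S5, this.2]
      · rw [joinCliques4_dist_two h ha]
        have : ¬ (part4 u = part4 v ∨ part4 u = 0 ∨ part4 v = 0) := by
          intro hc
          exact ha ((joinCliques4_adj_iff u v).mpr ⟨h, hc⟩)
        simp [S5, this]
    rw [key, Matrix.one_apply_ne h]; ring

lemma QP_eq :
    Q4 n₁ n₂ n₃ n₄ * P4 n₁ n₂ n₃ n₄ =
      Matrix.diagonal ![1, (n₁ : ℝ), n₂, n₃, n₄] := by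
  ext i j
  rw [Matrix.mul_apply]
  simp only [Q4, P4, Matrix.of_apply, ite_mul, one_mul, zero_mul]
  rw [Fintype.sum_sum_type]
  simp only [Fintype.sum_sum_type]
  fin_cases i <;> fin_cases j <;>
    simp [part4, Matrix.diagonal_apply, Finset.sum_ite_eq]

end Mat

set_option maxHeartbeats 1000000 in
lemma det5 (lam a b c d : ℝ) :
    ((lam + 1) • (1 : Matrix (Fin 5) (Fin 5) ℝ)
        - S5 * Matrix.diagonal ![1, a, b, c, d]).det =
      lam ^ 5 - ((a + b + c + d) - 4) * lam ^ 4
        - (3 * (a*b + a*c + a*d + b*c + b*d + c*d) + 4 * (a + b + c + d) - 6) * lam ^ 3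
        - (5 * (a*b*c + a*b*d + a*c*d + b*c*d) + 8 * (a*b + a*c + a*d + b*c + b*d + c*d)
            + 6 * (a + b + c + d) - 4) * lam ^ 2
        - (7 * (a*b*c*d) + 8 * (a*b*c + a*b*d + a*c*d + b*c*d)
            + 7 * (a*b + a*c + a*d + b*c + b*d + c*d) + 4 * (a + b + c + d) - 1) * lam
        - (4 * (a*b*c*d) + 3 * (a*b*c + a*b*d + a*c*d + b*c*d)
            + 2 * (a*b + a*c + a*d + b*c + b*d + c*d) + (a + b + c + d)) := by
  have hE : (lam + 1) • (1 : Matrix (Fin 5) (Fin 5) ℝ)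
      - S5 * Matrix.diagonal ![1, a, b, c, d] =
      !![lam, -a, -b, -c, -d;
         -1, lam + 1 - a, -2*b, -2*c, -2*d;
         -1, -2*a, lam + 1 - b, -2*c, -2*d;
         -1, -2*a, -2*b, lam + 1 - c, -2*d;
         -1, -2*a, -2*b, -2*c, lam + 1 - d] := by
    ext i j
    fin_cases i <;> fin_cases j <;>
      simp [S5, Matrix.mul_diagonal, Matrix.one_apply, Matrix.vecHead, Matrix.vecTail]
  rw [hE]
  simp [Matrix.det_succ_row_zero, Fin.sum_univ_succ, Fin.succAbove,
    Fin.castSucc, Fin.castAdd, Fin.castLE, Matrix.submatrix_apply]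
  ring

theorem charpoly_joinCliques4 (n₁ n₂ n₃ n₄ : ℕ)
    (h₁ : 1 ≤ n₁) (h₂ : 1 ≤ n₂) (h₃ : 1 ≤ n₃) (h₄ : 1 ≤ n₄) (lam : ℝ) :
    (lam • (1 : Matrix (Fin 1 ⊕ (Fin n₁ ⊕ (Fin n₂ ⊕ (Fin n₃ ⊕ Fin n₄))))
          (Fin 1 ⊕ (Fin n₁ ⊕ (Fin n₂ ⊕ (Fin n₃ ⊕ Fin n₄)))) ℝ)
        - distMatrix (joinCliques4 n₁ n₂ n₃ n₄)).det =
      (lam + 1) ^ (n₁ + n₂ + n₃ + n₄ + 1 - 5) *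
        (let e₁ : ℝ := (n₁ : ℝ) + n₂ + n₃ + n₄
         let e₂ : ℝ := (n₁ : ℝ) * n₂ + n₁ * n₃ + n₁ * n₄ + n₂ * n₃ + n₂ * n₄ + n₃ * n₄
         let e₃ : ℝ := (n₁ : ℝ) * n₂ * n₃ + n₁ * n₂ * n₄ + n₁ * n₃ * n₄ + n₂ * n₃ * n₄
         let e₄ : ℝ := (n₁ : ℝ) * n₂ * n₃ * n₄
         lam ^ 5 - (e₁ - 4) * lam ^ 4 - (3 * e₂ + 4 * e₁ - 6) * lam ^ 3
           - (5 * e₃ + 8 * e₂ + 6 * e₁ - 4) * lam ^ 2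
           - (7 * e₄ + 8 * e₃ + 7 * e₂ + 4 * e₁ - 1) * lam
           - (4 * e₄ + 3 * e₃ + 2 * e₂ + e₁)) := by
  have hcard : Fintype.card (V4 n₁ n₂ n₃ n₄) = n₁ + n₂ + n₃ + n₄ + 1 := by
    simp [V4]; omega
  have h5 : Fintype.card (Fin 5) ≤ Fintype.card (V4 n₁ n₂ n₃ n₄) := by
    rw [hcard, Fintype.card_fin]; omega
  rw [decomp lam, det_smul_one_sub_mul h5, Matrix.mul_assoc, QP_eq, det5, hcard,
    Fintype.card_fin]
end
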